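/- Let Q(x) = (1/√(2π)) ∫_x^∞ exp(−u²/2) du. Let a > 1, ν > 0, and let C, R be real numbers with C − R > 2·√(ν·ln a). Then the sequence n ↦ Q(√(n/ν)·(C − R)) · a^(2n) tends to 0 as n → ∞. -/

import Mathlib

open MeasureTheory

noncomputable def gaussQ (x : ℝ) : ℝ :=
  (1 / Real.sqrt (2 * Real.pi)) * ∫ u in Set.Ioi x, Real.exp (-u ^ 2 / 2)

lemma gaussQ_nonneg (x : ℝ) : 0 ≤ gaussQ x := by
  apply mul_nonneg
  · positivity
  · apply setIntegral_nonneg measurableSet_Ioi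
    intro u _
    positivity

lemma integrableOn_gauss (x : ℝ) :
    IntegrableOn (fun u : ℝ => Real.exp (-u ^ 2 / 2)) (Set.Ioi x) := by
  have h : (fun u : ℝ => Real.exp (-u ^ 2 / 2))
      = fun u : ℝ => Real.exp (-(1/2 : ℝ) * u ^ 2) := by
    funext u; ring_nf
  rw [h]
  exact (integrable_exp_neg_mul_sq (by norm_num)).integrableOn

lemma gaussQ_le (x : ℝ) (hx : 1 ≤ x) : gaussQ x ≤ Real.exp (-x ^ 2 / 2) := by
  have hc : (1 : ℝ) / Real.sqrt (2 * Real.pi) ≤ 1 := by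
    rw [div_le_one (by positivity)]
    rw [show (1:ℝ) = Real.sqrt 1 by simp]
    exact Real.sqrt_le_sqrt (by nlinarith [Real.pi_gt_three])
  have hI : (∫ u in Set.Ioi x, Real.exp (-u ^ 2 / 2))
      ≤ Real.exp (-x ^ 2 / 2) := by
    have hg : IntegrableOn (fun u : ℝ => Real.exp (x - x^2/2) * Real.exp (-u))
        (Set.Ioi x) := by
      have h := (exp_neg_integrableOn_Ioi x one_pos).const_mul (Real.exp (x - x^2/2))
      simp at h
      exact h
    have hmono : ∀ u ∈ Set.Ioi x,
        Real.exp (-u ^ 2 / 2) ≤ Real.exp (x - x^2/2) * Real.exp (-u) := by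
      intro u hu
      rw [← Real.exp_add]
      apply Real.exp_le_exp.2
      have hux : x ≤ u := le_of_lt hu
      nlinarith
    calc (∫ u in Set.Ioi x, Real.exp (-u ^ 2 / 2))
        ≤ ∫ u in Set.Ioi x, Real.exp (x - x^2/2) * Real.exp (-u) :=
          setIntegral_mono_on (integrableOn_gauss x) hg measurableSet_Ioi hmono
      _ = Real.exp (x - x^2/2) * ∫ u in Set.Ioi x, Real.exp (-u) := by
          rw [integral_const_mul]
      _ = Real.exp (x - x^2/2) * Real.exp (-x) := by rw [integral_exp_neg_Ioi]
      _ = Real.exp (-x ^ 2 / 2) := by rw [← Real.exp_add]; ring_nf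
  have hI0 : 0 ≤ ∫ u in Set.Ioi x, Real.exp (-u ^ 2 / 2) := by
    apply setIntegral_nonneg measurableSet_Ioi; intro u _; positivity
  calc gaussQ x ≤ 1 * ∫ u in Set.Ioi x, Real.exp (-u ^ 2 / 2) :=
        mul_le_mul_of_nonneg_right hc hI0
    _ = _ := one_mul _
    _ ≤ Real.exp (-x ^ 2 / 2) := hI

theorem stmt_6 (a ν C R : ℝ) (ha : 1 < a) (hν : 0 < ν)
    (hCR : C - R > 2 * Real.sqrt (ν * Real.log a)) :
    Filter.Tendsto (fun n : ℕ => gaussQ (Real.sqrt ((n : ℝ) / ν) * (C - R)) * a ^ (2 * n))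
      Filter.atTop (nhds 0) := by
  set δ := C - R with hδdef
  have hla : 0 ≤ Real.log a := Real.log_nonneg ha.le
  have hδ : 0 < δ := lt_of_le_of_lt (by positivity) hCR
  have hδ2 : 4 * (ν * Real.log a) < δ ^ 2 := by
    nlinarith [Real.sq_sqrt (by positivity : (0:ℝ) ≤ ν * Real.log a),
      Real.sqrt_nonneg (ν * Real.log a)]
  -- the geometric ratio
  set r : ℝ := Real.exp (-δ ^ 2 / (2 * ν)) * a ^ 2 with hrdef
  have hr0 : 0 ≤ r := by positivity
  have hr1 : r < 1 := by
    have ha2 : a ^ 2 = Real.exp (2 * Real.log a) := by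
      rw [← Real.exp_log (show (0:ℝ) < a ^ 2 by positivity), Real.log_pow]
      norm_num
    rw [hrdef, ha2, ← Real.exp_add, Real.exp_lt_one_iff]
    have : 2 * Real.log a < δ ^ 2 / (2 * ν) := by
      rw [lt_div_iff₀ (by positivity)]
      nlinarith
    rw [neg_div]
    linarith
  have hupper : ∀ᶠ n : ℕ in Filter.atTop,
      gaussQ (Real.sqrt ((n : ℝ) / ν) * δ) * a ^ (2 * n) ≤ r ^ n := by
    filter_upwards [Filter.eventually_ge_atTop ⌈ν / δ ^ 2⌉₊] with n hn
    have hnν : ν / δ ^ 2 ≤ (n : ℝ) := le_trans (Nat.le_ceil _) (by exact_mod_cast hn)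
    have hx1 : 1 ≤ Real.sqrt ((n : ℝ) / ν) * δ := by
      have h1 : (1 / δ : ℝ) ≤ Real.sqrt ((n : ℝ) / ν) := by
        rw [show (1 / δ : ℝ) = Real.sqrt ((1 / δ) ^ 2) from
          (Real.sqrt_sq (by positivity)).symm]
        apply Real.sqrt_le_sqrt
        rw [div_pow, one_pow, div_le_div_iff₀ (by positivity) hν]
        calc 1 * ν = ν := one_mul ν
          _ ≤ (n:ℝ) * δ ^ 2 := by
              have := (div_le_iff₀ (show (0:ℝ) < δ ^ 2 by positivity)).1 hnν
              linarith
      calc (1:ℝ) = (1 / δ) * δ := by field_simp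
        _ ≤ Real.sqrt ((n : ℝ) / ν) * δ := by
            exact mul_le_mul_of_nonneg_right h1 hδ.le
    have hsq : (Real.sqrt ((n : ℝ) / ν) * δ) ^ 2 = (n : ℝ) / ν * δ ^ 2 := by
      rw [mul_pow, Real.sq_sqrt (by positivity)]
    have hQ := gaussQ_le _ hx1
    rw [hsq] at hQ
    have hexp : Real.exp (-((n : ℝ) / ν * δ ^ 2) / 2) * a ^ (2 * n) = r ^ n := by
      rw [hrdef, mul_pow, ← Real.exp_nat_mul, pow_mul]
      congr 1
      ring
    calc gaussQ (Real.sqrt ((n : ℝ) / ν) * δ) * a ^ (2 * n)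
        ≤ Real.exp (-((n : ℝ) / ν * δ ^ 2) / 2) * a ^ (2 * n) :=
          mul_le_mul_of_nonneg_right hQ (by positivity)
      _ = r ^ n := hexp
  have hlower : ∀ᶠ n : ℕ in Filter.atTop,
      0 ≤ gaussQ (Real.sqrt ((n : ℝ) / ν) * δ) * a ^ (2 * n) := by
    filter_upwards with n
    exact mul_nonneg (gaussQ_nonneg _) (by positivity)
  exact squeeze_zero' hlower hupper (tendsto_pow_atTop_nhds_zero_of_lt_one hr0 hr1)
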